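/- For all X, Y ∈ W, ⟨X, P(Y)⟩ = ⟨X, Y⟩ − tr(S_X∘S_Y). Consequently P is self-adjoint and satisfies ⟨X, P(X)⟩ ≥ ⟨X, X⟩ for all X ∈ W; in particular P is a linear automorphism of W, and g̃(X,Y) := ⟨X, P(Y)⟩ defines an inner product on W. -/

import Mathlib

open scoped RealInnerProductSpace

/-- The endomorphism `S_X` of `V` associated to a second fundamental form `Π` and its
Weingarten operator `A`: `S_X(Z) = Π(X, P_W Z) - A_{P_{W^⊥} Z}(X)`. -/
noncomputable def Sop {V : Type*} [NormedAddCommGroup V] [InnerProductSpace ℝ V]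
    [FiniteDimensional ℝ V] (W : Submodule ℝ V)
    (Pi : W →ₗ[ℝ] W →ₗ[ℝ] ↥Wᗮ) (A : ↥Wᗮ →ₗ[ℝ] W →ₗ[ℝ] W) (X : W) : V →ₗ[ℝ] V :=
  Wᗮ.subtype ∘ₗ (Pi X) ∘ₗ (W.orthogonalProjectionOnto).toLinearMap
    - W.subtype ∘ₗ (A.flip X) ∘ₗ (Wᗮ.orthogonalProjectionOnto).toLinearMap

/-- The operator `P : W → W`, `P(X) = X - 2 ∑_A S_{e_A}(S_{e_A}(X))` (the sum, which lies
in `W`, is realized via the orthogonal projection onto `W`). -/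
noncomputable def Pop {V : Type*} [NormedAddCommGroup V] [InnerProductSpace ℝ V]
    [FiniteDimensional ℝ V] (W : Submodule ℝ V)
    (Pi : W →ₗ[ℝ] W →ₗ[ℝ] ↥Wᗮ) (A : ↥Wᗮ →ₗ[ℝ] W →ₗ[ℝ] W)
    {ι : Type*} [Fintype ι] (eW : OrthonormalBasis ι ℝ ↥W) : ↥W →ₗ[ℝ] ↥W :=
  LinearMap.id - (2 : ℝ) • ((W.orthogonalProjectionOnto).toLinearMap ∘ₗ
    (∑ i, Sop W Pi A (eW i) ∘ₗ Sop W Pi A (eW i)) ∘ₗ W.subtype)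

section Aux

variable {V : Type*} [NormedAddCommGroup V] [InnerProductSpace ℝ V] [FiniteDimensional ℝ V]

omit [FiniteDimensional ℝ V] in
lemma trace_eq_sum_inner'' {ι : Type*} [Fintype ι]
    (b : OrthonormalBasis ι ℝ V) (T : V →ₗ[ℝ] V) :
    LinearMap.trace ℝ V T = ∑ i, ⟪b i, T (b i)⟫ := by
  classical
  rw [LinearMap.trace_eq_matrix_trace ℝ b.toBasis, Matrix.trace]
  refine Finset.sum_congr rfl fun i _ => ?_
  rw [Matrix.diag_apply, LinearMap.toMatrix_apply, OrthonormalBasis.coe_toBasis,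
    b.coe_toBasis_repr_apply, b.repr_apply_apply]

variable (W : Submodule ℝ V) (Pi : W →ₗ[ℝ] W →ₗ[ℝ] ↥Wᗮ) (A : ↥Wᗮ →ₗ[ℝ] W →ₗ[ℝ] W)

lemma Sop_coe_W (X Y : W) : Sop W Pi A X (Y : V) = ((Pi X Y : ↥Wᗮ) : V) := by
  simp [Sop, Submodule.orthogonalProjectionOnto_mem_subspace_eq_self,
    Submodule.orthogonalProjectionOnto_apply_of_mem_orthogonal
      (W.le_orthogonal_orthogonal Y.2)]

lemma Sop_coe_perp (X : W) (ξ : ↥Wᗮ) : Sop W Pi A X (ξ : V) = -((A ξ X : W) : V) := by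
  simp [Sop, Submodule.orthogonalProjectionOnto_mem_subspace_eq_self,
    Submodule.orthogonalProjectionOnto_apply_of_mem_orthogonal ξ.2]

lemma Sop_comp (X Y : W) : Sop W Pi A X ∘ₗ Sop W Pi A Y
    = -(Wᗮ.subtype ∘ₗ ((Pi X) ∘ₗ (A.flip Y)) ∘ₗ (Submodule.orthogonalProjectionOnto Wᗮ).toLinearMap
       + W.subtype ∘ₗ ((A.flip X) ∘ₗ (Pi Y)) ∘ₗ (Submodule.orthogonalProjectionOnto W).toLinearMap) := by
  ext v
  have h1 : Sop W Pi A Y v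
      = ((Pi Y (Submodule.orthogonalProjectionOnto W v) : ↥Wᗮ) : V)
        - ((A (Submodule.orthogonalProjectionOnto Wᗮ v) Y : W) : V) := by
    simp [Sop]
  simp only [LinearMap.comp_apply, h1, map_sub, Sop_coe_W, Sop_coe_perp,
    LinearMap.neg_apply, LinearMap.add_apply, Submodule.coe_subtype, LinearMap.flip_apply,
    ContinuousLinearMap.coe_coe]
  abel

lemma trace_Sop_comp {ι : Type*} [Fintype ι] (eW : OrthonormalBasis ι ℝ ↥W)
    (hWein : ∀ (ξ : ↥Wᗮ) (X Y : W),
      ⟪((A ξ X : W) : V), (Y : V)⟫ = ⟪((Pi X Y : ↥Wᗮ) : V), (ξ : V)⟫) (X Y : W) :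
    LinearMap.trace ℝ V (Sop W Pi A X ∘ₗ Sop W Pi A Y)
      = -(2 * ∑ i, ⟪((Pi X (eW i) : ↥Wᗮ) : V), ((Pi Y (eW i) : ↥Wᗮ) : V)⟫) := by
  rw [Sop_comp, map_neg, map_add]
  have hperp : (Submodule.orthogonalProjectionOnto Wᗮ).toLinearMap ∘ₗ Wᗮ.subtype = LinearMap.id := by
    ext ξ; simp [Submodule.orthogonalProjectionOnto_mem_subspace_eq_self]
  have hW : (Submodule.orthogonalProjectionOnto W).toLinearMap ∘ₗ W.subtype = LinearMap.id := by
    ext x; simp [Submodule.orthogonalProjectionOnto_mem_subspace_eq_self]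
  have t1 : LinearMap.trace ℝ V
      (Wᗮ.subtype ∘ₗ ((Pi X) ∘ₗ (A.flip Y)) ∘ₗ (Submodule.orthogonalProjectionOnto Wᗮ).toLinearMap)
      = LinearMap.trace ℝ ↥W ((A.flip Y) ∘ₗ (Pi X)) := by
    rw [LinearMap.trace_comp_comm', LinearMap.comp_assoc, hperp, LinearMap.comp_id,
      LinearMap.trace_comp_comm']
  have t2 : LinearMap.trace ℝ V
      (W.subtype ∘ₗ ((A.flip X) ∘ₗ (Pi Y)) ∘ₗ (Submodule.orthogonalProjectionOnto W).toLinearMap)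
      = LinearMap.trace ℝ ↥W ((A.flip X) ∘ₗ (Pi Y)) := by
    rw [LinearMap.trace_comp_comm', LinearMap.comp_assoc, hW, LinearMap.comp_id]
  have e1 : LinearMap.trace ℝ ↥W ((A.flip Y) ∘ₗ (Pi X))
      = ∑ i, ⟪((Pi X (eW i) : ↥Wᗮ) : V), ((Pi Y (eW i) : ↥Wᗮ) : V)⟫ := by
    rw [trace_eq_sum_inner'' eW]
    refine Finset.sum_congr rfl fun i _ => ?_
    rw [Submodule.coe_inner, real_inner_comm]
    simp only [LinearMap.comp_apply, LinearMap.flip_apply]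
    rw [hWein, real_inner_comm]
  have e2 : LinearMap.trace ℝ ↥W ((A.flip X) ∘ₗ (Pi Y))
      = ∑ i, ⟪((Pi X (eW i) : ↥Wᗮ) : V), ((Pi Y (eW i) : ↥Wᗮ) : V)⟫ := by
    rw [trace_eq_sum_inner'' eW]
    refine Finset.sum_congr rfl fun i _ => ?_
    rw [Submodule.coe_inner, real_inner_comm]
    simp only [LinearMap.comp_apply, LinearMap.flip_apply]
    rw [hWein]
  rw [t1, t2, e1, e2]; ring

lemma Pop_inner {ι : Type*} [Fintype ι] (eW : OrthonormalBasis ι ℝ ↥W)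
    (hsymm : ∀ X Y : W, Pi X Y = Pi Y X)
    (hWein : ∀ (ξ : ↥Wᗮ) (X Y : W),
      ⟪((A ξ X : W) : V), (Y : V)⟫ = ⟪((Pi X Y : ↥Wᗮ) : V), (ξ : V)⟫) (X Y : W) :
    ⟪(X : V), ((Pop W Pi A eW Y : W) : V)⟫
      = ⟪(X : V), (Y : V)⟫
        + 2 * ∑ i, ⟪((Pi X (eW i) : ↥Wᗮ) : V), ((Pi Y (eW i) : ↥Wᗮ) : V)⟫ := by
  have key : ∀ i, ⟪(X : V), Sop W Pi A (eW i) (Sop W Pi A (eW i) (Y : V))⟫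
      = -⟪((Pi X (eW i) : ↥Wᗮ) : V), ((Pi Y (eW i) : ↥Wᗮ) : V)⟫ := by
    intro i
    rw [Sop_coe_W, Sop_coe_perp, inner_neg_right, real_inner_comm, hWein]
    rw [hsymm (eW i) X, hsymm (eW i) Y]
  have hproj : ∀ v : V, ⟪(X : V), ((Submodule.orthogonalProjectionOnto W v : W) : V)⟫ = ⟪(X : V), v⟫ := by
    intro v
    rw [← Submodule.coe_inner, Submodule.inner_orthogonalProjectionOnto_eq_of_mem_left]
  simp only [Pop, LinearMap.sub_apply, LinearMap.id_apply, LinearMap.smul_apply,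
    Submodule.coe_sub, Submodule.coe_smul, inner_sub_right, inner_smul_right,
    LinearMap.comp_apply, Submodule.coe_subtype, ContinuousLinearMap.coe_coe]
  rw [hproj]
  simp only [LinearMap.sum_apply, LinearMap.comp_apply, inner_sum]
  simp only [key, Finset.sum_neg_distrib]
  ring

end Aux

/-- `⟨X, P Y⟩ = ⟨X, Y⟩ - tr (S_X ∘ S_Y)`; consequently `P` is self-adjoint,
`⟨X, P X⟩ ≥ ⟨X, X⟩`, `P` is a linear automorphism of `W`, and
`g̃(X, Y) = ⟨X, P Y⟩` defines an inner product on `W`. -/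
theorem stmt_9 {V : Type*} [NormedAddCommGroup V] [InnerProductSpace ℝ V]
    [FiniteDimensional ℝ V] (W : Submodule ℝ V)
    (Pi : W →ₗ[ℝ] W →ₗ[ℝ] ↥Wᗮ) (A : ↥Wᗮ →ₗ[ℝ] W →ₗ[ℝ] W)
    (hsymm : ∀ X Y : W, Pi X Y = Pi Y X)
    (hWein : ∀ (ξ : ↥Wᗮ) (X Y : W), ⟪((A ξ X : W) : V), (Y : V)⟫ = ⟪((Pi X Y : ↥Wᗮ) : V), (ξ : V)⟫)
    {ι : Type*} [Fintype ι] (eW : OrthonormalBasis ι ℝ ↥W) :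
    (∀ X Y : W, ⟪(X : V), ((Pop W Pi A eW Y : W) : V)⟫
        = ⟪(X : V), (Y : V)⟫ - LinearMap.trace ℝ V (Sop W Pi A X ∘ₗ Sop W Pi A Y)) ∧
      (∀ X Y : W, ⟪((Pop W Pi A eW X : W) : V), (Y : V)⟫
        = ⟪(X : V), ((Pop W Pi A eW Y : W) : V)⟫) ∧
      (∀ X : W, ⟪(X : V), (X : V)⟫ ≤ ⟪(X : V), ((Pop W Pi A eW X : W) : V)⟫) ∧
      Function.Bijective (Pop W Pi A eW) ∧
      (∀ X : W, X ≠ 0 → 0 < ⟪(X : V), ((Pop W Pi A eW X : W) : V)⟫) := by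
  set Q : W → W → ℝ := fun X Y =>
    ∑ i, ⟪((Pi X (eW i) : ↥Wᗮ) : V), ((Pi Y (eW i) : ↥Wᗮ) : V)⟫ with hQ
  have hPin : ∀ X Y : W, ⟪(X : V), ((Pop W Pi A eW Y : W) : V)⟫
      = ⟪(X : V), (Y : V)⟫ + 2 * Q X Y := fun X Y => Pop_inner W Pi A eW hsymm hWein X Y
  have hQsymm : ∀ X Y : W, Q X Y = Q Y X := fun X Y =>
    Finset.sum_congr rfl fun i _ => real_inner_comm _ _
  have hQpos : ∀ X : W, 0 ≤ Q X X := fun X =>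
    Finset.sum_nonneg fun i _ => real_inner_self_nonneg
  have hle : ∀ X : W, ⟪(X : V), (X : V)⟫ ≤ ⟪(X : V), ((Pop W Pi A eW X : W) : V)⟫ := by
    intro X
    rw [hPin]
    nlinarith [hQpos X]
  have hpos : ∀ X : W, X ≠ 0 → 0 < ⟪(X : V), ((Pop W Pi A eW X : W) : V)⟫ := by
    intro X hX
    refine lt_of_lt_of_le ?_ (hle X)
    have hx : (X : V) ≠ 0 := by simpa using hX
    rw [real_inner_self_eq_norm_sq]
    exact pow_pos (norm_pos_iff.mpr hx) 2
  refine ⟨fun X Y => ?_, fun X Y => ?_, hle, ?_, hpos⟩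
  · rw [hPin, trace_Sop_comp W Pi A eW hWein]; ring
  · rw [hPin, real_inner_comm, hPin, hQsymm Y X, real_inner_comm (Y : V)]
  · rw [Function.Bijective, ← LinearMap.injective_iff_surjective, and_self]
    rw [injective_iff_map_eq_zero]
    intro X hX
    by_contra h
    have := hpos X h
    rw [hX] at this
    simp at this
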